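/- For every query q in Q[◇] (built from atoms, ⊤, ∧, and strict ◇ only), there is an equivalent query of the form q₁ ∧ … ∧ qₙ where each qᵢ is a path query in Q_p[◇]. In particular, a query of the form ρ₀ ∧ ◇(ρ₁ ∧ ⋀ᵢ₌₁ⁿ ◇qᵢ) is equivalent to ρ₀ ∧ ⋀ᵢ₌₁ⁿ ◇(ρ₁ ∧ ◇qᵢ). -/

import Mathlib

inductive LTL (σ : Type) : Type where
  | atom : σ → LTL σ
  | top : LTL σ
  | bot : LTL σ
  | and : LTL σ → LTL σ → LTL σ
  | next : LTL σ → LTL σ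
  | ev : LTL σ → LTL σ
  | evr : LTL σ → LTL σ
  | untl : LTL σ → LTL σ → LTL σ

/-- Satisfaction of an LTL query at position `ℓ` in a data instance `D`
(a finite word over `2^σ`, implicitly extended by `∅`). -/
def sat {σ : Type} (D : List (Finset σ)) : LTL σ → ℕ → Prop
  | .atom a, ℓ => a ∈ D.getD ℓ ∅
  | .top, _ => True
  | .bot, _ => False
  | .and p q, ℓ => sat D p ℓ ∧ sat D q ℓ
  | .next p, ℓ => sat D p (ℓ + 1)
  | .ev p, ℓ => ∃ m, ℓ < m ∧ sat D p m
  | .evr p, ℓ => ∃ m, ℓ ≤ m ∧ sat D p m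
  | .untl p q, ℓ => ∃ m, ℓ < m ∧ sat D q m ∧ ∀ k, ℓ < k → k < m → sat D p k

def equivQ {σ : Type} (p q : LTL σ) : Prop :=
  ∀ (D : List (Finset σ)) (ℓ : ℕ), sat D p ℓ ↔ sat D q ℓ

def entailsQ {σ : Type} (p q : LTL σ) : Prop :=
  ∀ (D : List (Finset σ)) (ℓ : ℕ), sat D p ℓ → sat D q ℓ

/-- The conjunction of the atoms in `ρ`. -/
noncomputable def conjF {σ : Type} (ρ : Finset σ) : LTL σ :=
  ρ.toList.foldr (fun a r => (LTL.atom a).and r) LTL.top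

/-- The class `Q[◇]`: queries built from atoms, `⊤`, `∧` and strict `◇` only. -/
inductive IsQDiam {σ : Type} : LTL σ → Prop
  | atom (a : σ) : IsQDiam (.atom a)
  | top : IsQDiam .top
  | and {p q : LTL σ} : IsQDiam p → IsQDiam q → IsQDiam (p.and q)
  | ev {p : LTL σ} : IsQDiam p → IsQDiam (.ev p)

/-- The path query `ρ₀ ∧ ◇(ρ₁ ∧ ◇(… ∧ ◇ρₙ))` of `Q_p[◇]`. -/
noncomputable def pathD {σ : Type} (ρ : Finset σ) : List (Finset σ) → LTL σ
  | [] => conjF ρ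
  | ρ' :: rest => (conjF ρ).and (LTL.ev (pathD ρ' rest))

/-- The path `◇`-query corresponding to a word `ρ₀ρ₁…ρₙ` over `2^σ`. -/
noncomputable def wq {σ : Type} : List (Finset σ) → LTL σ
  | [] => LTL.top
  | ρ :: rest => pathD ρ rest

section Aux

variable {σ : Type}

lemma sat_foldr_and (D : List (Finset σ)) (L : List (LTL σ)) (ℓ : ℕ) :
    sat D (L.foldr LTL.and LTL.top) ℓ ↔ ∀ q ∈ L, sat D q ℓ := by
  induction L with
  | nil => simp [sat]
  | cons q L ih => simp [sat, ih]

lemma sat_conjF (D : List (Finset σ)) (ρ : Finset σ) (ℓ : ℕ) :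
    sat D (conjF ρ) ℓ ↔ ∀ a ∈ ρ, a ∈ D.getD ℓ ∅ := by
  unfold conjF
  rw [show (∀ a ∈ ρ, a ∈ D.getD ℓ ∅) ↔ ∀ a ∈ ρ.toList, a ∈ D.getD ℓ ∅ by
    simp [Finset.mem_toList]]
  induction ρ.toList with
  | nil => simp [sat]
  | cons a L ih => simp [sat, ih]

lemma sat_conjF_union [DecidableEq σ] (D : List (Finset σ)) (ρ₁ ρ₂ : Finset σ) (ℓ : ℕ) :
    sat D (conjF (ρ₁ ∪ ρ₂)) ℓ ↔ sat D (conjF ρ₁) ℓ ∧ sat D (conjF ρ₂) ℓ := by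
  simp [sat_conjF, Finset.mem_union, or_imp, forall_and]

lemma sat_ev_iff (D : List (Finset σ)) (q : LTL σ) (ℓ : ℕ) :
    sat D (LTL.ev q) ℓ ↔ ∃ m, ℓ < m ∧ sat D q m := Iff.rfl

lemma sat_ev_mono (D : List (Finset σ)) (q : LTL σ) {k m : ℕ} (h : k ≤ m) :
    sat D (LTL.ev q) m → sat D (LTL.ev q) k := by
  rintro ⟨m', hm', hs⟩
  exact ⟨m', lt_of_le_of_lt h hm', hs⟩

/-- The key minimal-witness argument: if each `◇qᵢ` together with `r` is
witnessed somewhere after `ℓ`, then all of them are witnessed simultaneously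
(at the earliest of the witnesses). -/
lemma key_min (D : List (Finset σ)) (r : LTL σ) (ℓ : ℕ) :
    ∀ qs : List (LTL σ), qs ≠ [] →
    (∀ q ∈ qs, ∃ m, ℓ < m ∧ sat D r m ∧ sat D (LTL.ev q) m) →
    ∃ m, ℓ < m ∧ sat D r m ∧ ∀ q ∈ qs, sat D (LTL.ev q) m := by
  intro qs
  induction qs with
  | nil => simp
  | cons q qs ih =>
    intro _ h
    obtain ⟨m₁, hm₁, hr₁, he₁⟩ := h q (by simp)
    rcases eq_or_ne qs [] with rfl | hne
    · exact ⟨m₁, hm₁, hr₁, by simpa using he₁⟩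
    · obtain ⟨m₂, hm₂, hr₂, he₂⟩ := ih hne (fun q' hq' => h q' (by simp [hq']))
      refine ⟨min m₁ m₂, lt_min hm₁ hm₂, ?_, ?_⟩
      · rcases min_cases m₁ m₂ with ⟨h', _⟩ | ⟨h', _⟩ <;> rw [h'] <;> assumption
      · intro q' hq'
        rcases List.mem_cons.1 hq' with rfl | hq'
        · exact sat_ev_mono D _ (min_le_left _ _) he₁
        · exact sat_ev_mono D _ (min_le_right _ _) (he₂ q' hq')

lemma wq_cons (ρ : Finset σ) (rest : List (Finset σ)) : wq (ρ :: rest) = pathD ρ rest := rfl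

lemma sat_pathD_ne (D : List (Finset σ)) (ρ : Finset σ) {w : List (Finset σ)}
    (hw : w ≠ []) (m : ℕ) :
    sat D (pathD ρ w) m ↔ sat D (conjF ρ) m ∧ sat D (LTL.ev (wq w)) m := by
  cases w with
  | nil => exact absurd rfl hw
  | cons ρ' rest => simp [pathD, wq, sat]

/-- A conjunction of path queries is the conjunction of its heads together
with the `◇`-tails of its members with nonempty tails. -/
lemma sat_paths_conj [DecidableEq σ] (D : List (Finset σ)) (ℓ : ℕ) :
    ∀ ps : List (Finset σ × List (Finset σ)),
    ((∀ p ∈ ps, sat D (pathD p.1 p.2) ℓ) ↔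
      (sat D (conjF (ps.foldr (fun p acc => p.1 ∪ acc) ∅)) ℓ ∧
       ∀ w ∈ (ps.map Prod.snd).filter (· ≠ []), sat D (LTL.ev (wq w)) ℓ)) := by
  intro ps
  induction ps with
  | nil => simp [sat_conjF]
  | cons p ps ih =>
    rcases p with ⟨ρ, w⟩
    rw [List.forall_mem_cons, ih]
    cases w with
    | nil =>
      simp [pathD, List.filter_cons, sat_conjF_union]
      tauto
    | cons ρ' rest =>
      simp [pathD, List.filter_cons, sat_conjF_union, sat, wq_cons]
      tauto

end Aux

/-- Every `q ∈ Q[◇]` is equivalent to a conjunction of path queries of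
`Q_p[◇]`; in particular `ρ₀ ∧ ◇(ρ₁ ∧ ⋀ᵢ ◇qᵢ) ≡ ρ₀ ∧ ⋀ᵢ ◇(ρ₁ ∧ ◇qᵢ)` (for a
nonempty family `q₁, …, qₙ`). -/
theorem QDiam_equiv_conj_of_paths (σ : Type) [DecidableEq σ] :
    (∀ q : LTL σ, IsQDiam q →
      ∃ ps : List (Finset σ × List (Finset σ)),
        equivQ q ((ps.map fun p => pathD p.1 p.2).foldr LTL.and LTL.top)) ∧
    (∀ (ρ₀ ρ₁ : Finset σ) (qs : List (LTL σ)), qs ≠ [] →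
      equivQ
        ((conjF ρ₀).and (LTL.ev ((conjF ρ₁).and ((qs.map LTL.ev).foldr LTL.and LTL.top))))
        ((conjF ρ₀).and
          ((qs.map fun q => LTL.ev ((conjF ρ₁).and (LTL.ev q))).foldr LTL.and LTL.top))) := by
  constructor
  · intro q hq
    induction hq with
    | atom a =>
      refine ⟨[({a}, [])], fun D ℓ => ?_⟩
      simp [sat_foldr_and, pathD, sat_conjF, sat]
    | top => exact ⟨[], fun D ℓ => by simp [sat_foldr_and, sat]⟩
    | and hp hq' ihp ihq =>
      obtain ⟨ps₁, h₁⟩ := ihp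
      obtain ⟨ps₂, h₂⟩ := ihq
      refine ⟨ps₁ ++ ps₂, fun D ℓ => ?_⟩
      simp only [sat, h₁ D ℓ, h₂ D ℓ, sat_foldr_and, List.mem_map, List.mem_append]
      constructor
      · rintro ⟨h₁', h₂'⟩ q' ⟨p, hp', rfl⟩
        rcases hp' with hp' | hp'
        · exact h₁' _ ⟨p, hp', rfl⟩
        · exact h₂' _ ⟨p, hp', rfl⟩
      · intro h
        exact ⟨fun q' ⟨p, hp', e⟩ => h q' ⟨p, .inl hp', e⟩,
               fun q' ⟨p, hp', e⟩ => h q' ⟨p, .inr hp', e⟩⟩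
    | ev hp ihp =>
      obtain ⟨ps, hps⟩ := ihp
      set ρ : Finset σ := ps.foldr (fun p acc => p.1 ∪ acc) ∅ with hρ
      set ts : List (List (Finset σ)) := (ps.map Prod.snd).filter (· ≠ []) with hts
      have hsat0 : ∀ (D : List (Finset σ)) (m : ℕ),
          sat D ((ps.map fun p => pathD p.1 p.2).foldr LTL.and LTL.top) m ↔
            (sat D (conjF ρ) m ∧ ∀ w ∈ ts, sat D (LTL.ev (wq w)) m) := by
        intro D m
        rw [sat_foldr_and, ← sat_paths_conj D m ps]
        simp only [List.mem_map, forall_exists_index, and_imp, Prod.forall]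
        exact ⟨fun h a b hab => h _ a b hab rfl, fun h q' a b hab e => e ▸ h a b hab⟩
      have hsat : ∀ (D : List (Finset σ)) (m : ℕ),
          sat D _ m ↔ (sat D (conjF ρ) m ∧ ∀ w ∈ ts, sat D (LTL.ev (wq w)) m) :=
        fun D m => (hps D m).trans (hsat0 D m)
      rcases eq_or_ne ts [] with hts0 | htsne
      · refine ⟨[(∅, [ρ])], fun D ℓ => ?_⟩
        simp only [List.map_cons, List.map_nil, List.foldr_cons, List.foldr_nil, sat]
        constructor
        · rintro ⟨m, hm, hs⟩
          have := (hsat D m).1 hs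
          refine ⟨⟨?_, m, hm, ?_⟩, trivial⟩
          · simp [pathD, sat_conjF]
          · simpa [pathD] using this.1
        · rintro ⟨⟨_, m, hm, hs⟩, -⟩
          refine ⟨m, hm, (hsat D m).2 ⟨by simpa [pathD] using hs, ?_⟩⟩
          simp [hts0]
      · refine ⟨ts.map fun w => (∅, ρ :: w), fun D ℓ => ?_⟩
        have hwne : ∀ w ∈ ts, w ≠ [] := by
          intro w hw
          have := List.of_mem_filter (hts ▸ hw)
          simpa using this
        rw [sat_foldr_and]
        constructor
        · rintro ⟨m, hm, hs⟩
          have h' := (hsat D m).1 hs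
          intro q' hq'
          simp only [List.mem_map] at hq'
          obtain ⟨p, ⟨w, hw, rfl⟩, rfl⟩ := hq'
          simp only [pathD, sat]
          refine ⟨by simp [sat_conjF], m, hm, ?_⟩
          rw [sat_pathD_ne D ρ (hwne w hw) m]
          exact ⟨h'.1, h'.2 w hw⟩
        · intro h
          have h' : ∀ w ∈ ts, ∃ m, ℓ < m ∧ sat D (conjF ρ) m ∧ sat D (LTL.ev (wq w)) m := by
            intro w hw
            have := h (pathD ∅ (ρ :: w)) (by
              simp only [List.mem_map]
              exact ⟨(∅, ρ :: w), ⟨w, hw, rfl⟩, rfl⟩)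
            simp only [pathD, sat] at this
            obtain ⟨-, m, hm, hs⟩ := this
            rw [sat_pathD_ne D ρ (hwne w hw) m] at hs
            exact ⟨m, hm, hs⟩
          obtain ⟨m, hm, hr, he⟩ := key_min D (conjF ρ) ℓ (ts.map wq)
            (by simpa using htsne)
            (by
              intro q' hq'
              simp only [List.mem_map] at hq'
              obtain ⟨w, hw, rfl⟩ := hq'
              exact h' w hw)
          exact ⟨m, hm, (hsat D m).2 ⟨hr, fun w hw => he (wq w) (List.mem_map_of_mem (f := wq) hw)⟩⟩
  · intro ρ₀ ρ₁ qs hne D ℓ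
    simp only [sat, sat_foldr_and, List.mem_map]
    constructor
    · rintro ⟨h₀, m, hm, h₁, hall⟩
      refine ⟨h₀, ?_⟩
      rintro q' ⟨q, hq, rfl⟩
      exact ⟨m, hm, h₁, hall (LTL.ev q) ⟨q, hq, rfl⟩⟩
    · rintro ⟨h₀, h⟩
      have h' : ∀ q ∈ qs, ∃ m, ℓ < m ∧ sat D (conjF ρ₁) m ∧ sat D (LTL.ev q) m := by
        intro q hq
        have := h _ ⟨q, hq, rfl⟩
        simpa [sat] using this
      obtain ⟨m, hm, hr, he⟩ := key_min D (conjF ρ₁) ℓ qs hne h'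
      refine ⟨h₀, m, hm, hr, ?_⟩
      rintro q' ⟨q, hq, rfl⟩
      exact he q hq
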